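/- For every real p > 0, every real ν > 0, and every natural number M ≥ 1, the function h ↦ h⁻¹ * ( p * ((M : ℝ) + Real.exp (h/p) * Real.exp (ν*h/p)) / ((M : ℝ) + Real.exp (ν*h/p)) − p ) tends to 1/(M+1) as h tends to 0 from the right (i.e. along the filter 𝓝[>] 0). -/

import Mathlib

open Filter

/-- "From above" one-sided limit in the proof of shadow-lifting for the STL
conjunction (case `p_min < 0`). -/
theorem stl_and_lt0_shadow_lifting_at_right (p ν : ℝ) (hp : 0 < p) (hν : 0 < ν)
    (M : ℕ) (hM : 1 ≤ M) :
    Tendsto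
      (fun h : ℝ =>
        h⁻¹ *
          (p * ((M : ℝ) + Real.exp (h / p) * Real.exp (ν * h / p)) /
              ((M : ℝ) + Real.exp (ν * h / p)) - p))
      (nhdsWithin 0 (Set.Ioi 0)) (nhds (1 / ((M : ℝ) + 1))) := by
  have hMpos : (0:ℝ) < (M:ℝ) := by exact_mod_cast Nat.lt_of_lt_of_le Nat.zero_lt_one hM
  -- first factor: (exp(h/p)-1)/(h/p) → 1
  have slope1 : Tendsto (fun x : ℝ => x⁻¹ * (Real.exp x - 1)) (nhdsWithin 0 {(0:ℝ)}ᶜ)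
      (nhds 1) := by
    have := hasDerivAt_iff_tendsto_slope.mp (Real.hasDerivAt_exp 0)
    simpa [slope_fun_def, Real.exp_zero] using this
  have hdiv : Tendsto (fun h : ℝ => h / p) (nhdsWithin 0 (Set.Ioi 0))
      (nhdsWithin 0 {(0:ℝ)}ᶜ) := by
    apply tendsto_nhdsWithin_of_tendsto_nhds_of_eventually_within
    · have h0 : Tendsto (fun h : ℝ => h / p) (nhds (0:ℝ)) (nhds (0 / p)) :=
        tendsto_id.div_const p
      rw [zero_div] at h0
      exact h0.mono_left nhdsWithin_le_nhds
    · filter_upwards [self_mem_nhdsWithin] with h (hh : 0 < h)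
      exact ne_of_gt (div_pos hh hp)
  have t1 : Tendsto (fun h : ℝ => (h / p)⁻¹ * (Real.exp (h / p) - 1))
      (nhdsWithin 0 (Set.Ioi 0)) (nhds 1) := slope1.comp hdiv
  -- second factor
  have t2 : Tendsto (fun h : ℝ => Real.exp (ν * h / p) / ((M:ℝ) + Real.exp (ν * h / p)))
      (nhdsWithin 0 (Set.Ioi 0)) (nhds (1 / ((M:ℝ) + 1))) := by
    have hc : Tendsto (fun h : ℝ => Real.exp (ν * h / p)) (nhdsWithin 0 (Set.Ioi 0))
        (nhds 1) := by
      have : Continuous fun h : ℝ => Real.exp (ν * h / p) := by continuity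
      have := (this.tendsto 0).mono_left (nhdsWithin_le_nhds (s := Set.Ioi 0))
      simpa using this
    have hd : Tendsto (fun h : ℝ => (M:ℝ) + Real.exp (ν * h / p))
        (nhdsWithin 0 (Set.Ioi 0)) (nhds ((M:ℝ) + 1)) := tendsto_const_nhds.add hc
    have := hc.div hd (by positivity)
    exact this
  have key := t1.mul t2
  rw [one_mul] at key
  apply key.congr'
  filter_upwards [self_mem_nhdsWithin] with h (hh : 0 < h)
  have hB : (0:ℝ) < (M:ℝ) + Real.exp (ν * h / p) := by positivity
  field_simp
  ring
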